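/- For a finite graph (V,F) with c(F) connected components, the number of ℤ_q-flows on (V,F) equals q^{|F| - |V| + c(F)}. -/
import Mathlib


open Finset

noncomputable section

attribute [local instance] Classical.propDecidable

/-- A finite multigraph with a fixed orientation: each edge has a source and a target. -/
structure Multigraph (V E : Type) where
  src : E → V
  tgt : E → V

namespace Multigraph

variable {V E : Type} [Fintype V] [Fintype E] [DecidableEq V] [DecidableEq E]

/-- A `ℤ_q`-flow: conservation at every vertex. -/
def IsFlow (G : Multigraph V E) (q : ℕ) (f : E → ZMod q) : Prop :=
  ∀ v : V, ∑ e ∈ univ.filter (fun e => G.tgt e = v), f e =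
           ∑ e ∈ univ.filter (fun e => G.src e = v), f e

/-- A `ℤ`-flow: conservation at every vertex. -/
def IsZFlow (G : Multigraph V E) (f : E → ℤ) : Prop :=
  ∀ v : V, ∑ e ∈ univ.filter (fun e => G.tgt e = v), f e =
           ∑ e ∈ univ.filter (fun e => G.src e = v), f e

/-- The support of a flow: the set of edges with nonzero value. -/
def flowSupport {q : ℕ} (f : E → ZMod q) : Finset E :=
  univ.filter (fun e => f e ≠ 0)

/-- Flow partition function (complex variable). -/
def Zflow (G : Multigraph V E) (q : ℕ) [NeZero q] (x : ℂ) : ℂ :=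
  ∑ f ∈ univ.filter (fun f : E → ZMod q => G.IsFlow q f), x ^ (flowSupport f).card

/-- Flow partition function (real variable). -/
def ZflowR (G : Multigraph V E) (q : ℕ) [NeZero q] (x : ℝ) : ℝ :=
  ∑ f ∈ univ.filter (fun f : E → ZMod q => G.IsFlow q f), x ^ (flowSupport f).card

/-- Potts partition function: sum over colourings of `w ^ (number of monochromatic edges)`. -/
def ZPotts (G : Multigraph V E) (q : ℕ) (w : ℂ) : ℂ :=
  ∑ σ : V → Fin q, w ^ (univ.filter (fun e => σ (G.src e) = σ (G.tgt e))).card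

/-- The simple graph on `V` induced by the edges in `F` (loops/multiplicities dropped;
this does not change connected components). -/
def compRel (G : Multigraph V E) (F : Finset E) : SimpleGraph V :=
  SimpleGraph.fromRel (fun v w => ∃ e ∈ F, G.src e = v ∧ G.tgt e = w)

/-- Number of connected components of the spanning subgraph `(V, F)`. -/
def compCount (G : Multigraph V E) (F : Finset E) : ℕ :=
  Nat.card (G.compRel F).ConnectedComponent

/-- Random cluster partition function. -/
def ZRC (G : Multigraph V E) (q : ℕ) (y : ℂ) : ℂ :=
  ∑ F : Finset E, (q : ℂ) ^ (G.compCount F) * y ^ F.card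

/-- The spanning subgraph `(V, A)`. -/
def edgeSubgraph (G : Multigraph V E) (A : Finset E) : Multigraph V {e : E // e ∈ A} :=
  ⟨fun e => G.src e.1, fun e => G.tgt e.1⟩

/-- Deletion of the edge `e`. -/
def deleteEdge (G : Multigraph V E) (e : E) : Multigraph V {e' : E // e' ≠ e} :=
  ⟨fun e' => G.src e'.1, fun e' => G.tgt e'.1⟩

/-- Contraction of the edge `e`: the edge `e` is removed and every endpoint equal to
`G.tgt e` is redirected to `G.src e`, merging the two endpoints of `e`. -/
def contractEdge (G : Multigraph V E) (e : E) : Multigraph V {e' : E // e' ≠ e} :=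
  ⟨fun e' => if G.src e'.1 = G.tgt e then G.src e else G.src e'.1,
   fun e' => if G.tgt e'.1 = G.tgt e then G.src e else G.tgt e'.1⟩

end Multigraph

/-- The `(L+1) × (L+1)` grid graph, with horizontal and vertical edges oriented
in the positive direction. -/
def gridGraph (L : ℕ) :
    Multigraph (Fin (L+1) × Fin (L+1)) ((Fin L × Fin (L+1)) ⊕ (Fin (L+1) × Fin L)) :=
  ⟨Sum.elim (fun p => (p.1.castSucc, p.2)) (fun p => (p.1, p.2.castSucc)),
   Sum.elim (fun p => (p.1.succ, p.2)) (fun p => (p.1, p.2.succ))⟩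


namespace FlowAux
open Multigraph Finset
variable {V E : Type} [Fintype V] [Fintype E] [DecidableEq V] [DecidableEq E]
  (G : Multigraph V E) (q : ℕ)

set_option linter.unusedSectionVars false

/-- The boundary map sending an edge weighting to its excess at each vertex. -/
def phi : (E → ZMod q) →+ (V → ZMod q) where
  toFun f v := (∑ e ∈ univ.filter (fun e => G.tgt e = v), f e) -
    ∑ e ∈ univ.filter (fun e => G.src e = v), f e
  map_zero' := by funext v; simp
  map_add' f g := by funext v; simp [Finset.sum_add_distrib]; ring

/-- The component-sum map. -/
def psi : (V → ZMod q) →+ ((G.compRel Finset.univ).ConnectedComponent → ZMod q) where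
  toFun g c := ∑ v ∈ univ.filter
    (fun v => (G.compRel Finset.univ).connectedComponentMk v = c), g v
  map_zero' := by funext c; simp
  map_add' f g := by funext c; simp [Finset.sum_add_distrib]

lemma mk_out {S : SimpleGraph V} (c : S.ConnectedComponent) :
    S.connectedComponentMk c.out = c := Quot.out_eq c

lemma mk_src_tgt (e : E) :
    (G.compRel Finset.univ).connectedComponentMk (G.src e)
      = (G.compRel Finset.univ).connectedComponentMk (G.tgt e) := by
  by_cases h : G.src e = G.tgt e
  · rw [h]
  · exact SimpleGraph.ConnectedComponent.connectedComponentMk_eq_of_adj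
      ((SimpleGraph.fromRel_adj _ _ _).mpr ⟨h, Or.inl ⟨e, Finset.mem_univ e, rfl, rfl⟩⟩)

lemma psi_phi (f : E → ZMod q) : psi G q (phi G q f) = 0 := by
  funext c
  show ∑ v ∈ univ.filter _, ((∑ e ∈ univ.filter (fun e => G.tgt e = v), f e) -
    ∑ e ∈ univ.filter (fun e => G.src e = v), f e) = 0
  rw [Finset.sum_sub_distrib,
      Finset.sum_fiberwise_eq_sum_filter univ _ (fun e => G.tgt e) f,
      Finset.sum_fiberwise_eq_sum_filter univ _ (fun e => G.src e) f]
  rw [sub_eq_zero]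
  apply Finset.sum_congr _ (fun _ _ => rfl)
  apply Finset.filter_congr
  intro e _
  simp [mk_src_tgt G e]

/-- Dipoles across an edge are boundaries. -/
lemma single_edge_mem (e : E) (c : ZMod q) :
    Pi.single (G.src e) c - Pi.single (G.tgt e) c ∈ (phi G q).range := by
  refine ⟨Pi.single e (-c), ?_⟩
  funext v
  show (∑ e' ∈ univ.filter (fun e' => G.tgt e' = v), Pi.single e (-c) e') -
    ∑ e' ∈ univ.filter (fun e' => G.src e' = v), Pi.single e (-c) e' = _
  have h1 : ∀ (g : E → V), (∑ e' ∈ univ.filter (fun e' => g e' = v), Pi.single e (-c) e')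
      = if g e = v then -c else 0 := by
    intro g
    simp only [Pi.single_apply]
    rw [Finset.sum_ite_eq' (univ.filter (fun e' => g e' = v)) e (fun _ => -c)]
    simp
  rw [h1, h1]
  by_cases h1 : G.src e = v <;> by_cases h2 : G.tgt e = v <;>
    simp [Pi.single_apply, h1, h2, eq_comm]

/-- Dipoles across an adjacency of the component graph are boundaries. -/
lemma adj_dipole {a b : V} (h : (G.compRel Finset.univ).Adj a b) (c : ZMod q) :
    Pi.single a c - Pi.single b c ∈ (phi G q).range := by
  rw [Multigraph.compRel, SimpleGraph.fromRel_adj] at h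
  obtain ⟨-, ⟨e, -, rfl, rfl⟩ | ⟨e, -, rfl, rfl⟩⟩ := h
  · exact single_edge_mem G q e c
  · have := neg_mem (single_edge_mem G q e c)
    simpa using this

/-- Dipoles along a walk are boundaries. -/
lemma walk_dipole {a b : V} (w : (G.compRel Finset.univ).Walk a b) (c : ZMod q) :
    Pi.single a c - Pi.single b c ∈ (phi G q).range := by
  induction w with
  | nil => simpa using (phi G q).range.zero_mem
  | @cons a x b h p ih =>
    have key : (Pi.single a c - Pi.single b c : V → ZMod q)
        = (Pi.single a c - Pi.single x c) + (Pi.single x c - Pi.single b c) := by abel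
    rw [key]
    exact add_mem (adj_dipole G q h c) ih

/-- Every element of the kernel of `psi` is a boundary. -/
lemma mem_range_of_psi_eq_zero (g : V → ZMod q) (hg : psi G q g = 0) :
    g ∈ (phi G q).range := by
  set S := G.compRel (Finset.univ : Finset E) with hS
  set root : V → V := fun v => (S.connectedComponentMk v).out with hroot
  have hroot_mk : ∀ v, S.connectedComponentMk (root v) = S.connectedComponentMk v :=
    fun v => Quot.out_eq _
  have hrr : ∀ v, root (root v) = root v := by
    intro v
    show (S.connectedComponentMk (root v)).out = (S.connectedComponentMk v).out
    rw [hroot_mk]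
  have key : g = ∑ v : V, (Pi.single v (g v) - Pi.single (root v) (g v)) := by
    funext w
    rw [Finset.sum_apply]
    simp only [Pi.sub_apply, Pi.single_apply]
    rw [Finset.sum_sub_distrib, Finset.sum_ite_eq Finset.univ w g]
    have h2 : ∑ v : V, (if w = root v then g v else 0) = 0 := by
      by_cases hw : root w = w
      · have hiff : ∀ v, (w = root v) ↔
            (S.connectedComponentMk v = S.connectedComponentMk w) := by
          intro v
          constructor
          · intro h
            have h' : S.connectedComponentMk w = S.connectedComponentMk (root v) :=
              congrArg _ h
            rw [hroot_mk] at h'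
            exact h'.symm
          · intro h
            show w = (S.connectedComponentMk v).out
            rw [h]
            exact hw.symm
        calc ∑ v : V, (if w = root v then g v else 0)
            = ∑ v ∈ univ.filter
                (fun v => S.connectedComponentMk v = S.connectedComponentMk w), g v := by
              rw [← Finset.sum_filter]
              apply Finset.sum_congr _ (fun _ _ => rfl)
              apply Finset.filter_congr
              intro v _
              simpa using hiff v
          _ = 0 := congrFun hg _
      · apply Finset.sum_eq_zero
        intro v _
        rw [if_neg]
        intro h
        exact hw (by rw [h, hrr])
    rw [h2]
    simp
  rw [key]
  apply AddSubgroup.sum_mem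
  intro v _
  have hreach : S.Reachable v (root v) :=
    SimpleGraph.ConnectedComponent.exact (hroot_mk v).symm
  exact hreach.elim fun p => walk_dipole G q p (g v)

end FlowAux

/-- The number of `ℤ_q`-flows on a finite graph `(V,F)` equals `q^(|F| - |V| + c(F))`
(stated multiplicatively to avoid subtraction). -/
theorem flow_count {V E : Type} [Fintype V] [Fintype E] [DecidableEq V] [DecidableEq E]
    (G : Multigraph V E) (q : ℕ) (hq : 0 < q) :
    Nat.card {f : E → ZMod q // G.IsFlow q f} * q ^ Fintype.card V =
      q ^ (Fintype.card E + G.compCount Finset.univ) := by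
  haveI : NeZero q := ⟨hq.ne'⟩
  classical
  set S := G.compRel (Finset.univ : Finset E) with hS
  haveI : Finite S.ConnectedComponent :=
    Finite.of_surjective S.connectedComponentMk (fun c => Quot.exists_rep c)
  set φ := FlowAux.phi G q with hφ
  set ψ := FlowAux.psi G q with hψ
  -- flows are the kernel of φ
  have hflow : Nat.card {f : E → ZMod q // G.IsFlow q f} = Nat.card φ.ker := by
    apply Nat.card_congr
    apply Equiv.subtypeEquivRight
    intro f
    rw [AddMonoidHom.mem_ker]
    constructor
    · intro h
      funext v
      show (∑ e ∈ Finset.univ.filter (fun e => G.tgt e = v), f e) -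
        ∑ e ∈ Finset.univ.filter (fun e => G.src e = v), f e = 0
      rw [h v, sub_self]
    · intro h v
      have h' := congrFun h v
      exact sub_eq_zero.mp h'
  -- range φ = ker ψ
  have hrk : φ.range = ψ.ker := by
    ext g
    constructor
    · rintro ⟨f, rfl⟩
      exact AddMonoidHom.mem_ker.mpr (FlowAux.psi_phi G q f)
    · intro hgk
      exact FlowAux.mem_range_of_psi_eq_zero G q g (AddMonoidHom.mem_ker.mp hgk)
  -- ψ is surjective
  have hψsurj : Function.Surjective ψ := by
    intro h
    refine ⟨fun v => if v = (S.connectedComponentMk v).out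
      then h (S.connectedComponentMk v) else 0, ?_⟩
    funext c
    show ∑ v ∈ Finset.univ.filter (fun v => S.connectedComponentMk v = c),
      (if v = (S.connectedComponentMk v).out then h (S.connectedComponentMk v) else 0) = h c
    rw [Finset.sum_eq_single_of_mem c.out]
    · rw [FlowAux.mk_out]
      simp
    · simp [Finset.mem_filter, FlowAux.mk_out]
    · intro v hv hne
      rw [Finset.mem_filter] at hv
      rw [if_neg]
      intro h'
      exact hne (by rw [h', hv.2])
  -- counting
  have c1 : Nat.card (E → ZMod q) = Nat.card ((E → ZMod q) ⧸ φ.ker) * Nat.card φ.ker :=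
    AddSubgroup.card_eq_card_quotient_mul_card_addSubgroup _
  have c2 : Nat.card ((E → ZMod q) ⧸ φ.ker) = Nat.card ψ.ker := by
    rw [Nat.card_congr (QuotientAddGroup.quotientKerEquivRange φ).toEquiv, hrk]
  have c3 : Nat.card (V → ZMod q) = Nat.card ((V → ZMod q) ⧸ ψ.ker) * Nat.card ψ.ker :=
    AddSubgroup.card_eq_card_quotient_mul_card_addSubgroup _
  have c4 : Nat.card ((V → ZMod q) ⧸ ψ.ker) =
      Nat.card (S.ConnectedComponent → ZMod q) := by
    rw [Nat.card_congr (QuotientAddGroup.quotientKerEquivRange ψ).toEquiv]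
    rw [(AddMonoidHom.range_eq_top).mpr hψsurj]
    exact Nat.card_congr AddSubgroup.topEquiv.toEquiv
  have cE : Nat.card (E → ZMod q) = q ^ Fintype.card E := by
    rw [Nat.card_fun, Nat.card_zmod, Nat.card_eq_fintype_card]
  have cV : Nat.card (V → ZMod q) = q ^ Fintype.card V := by
    rw [Nat.card_fun, Nat.card_zmod, Nat.card_eq_fintype_card]
  have cC : Nat.card (S.ConnectedComponent → ZMod q) = q ^ G.compCount Finset.univ := by
    rw [Nat.card_fun, Nat.card_zmod]
    rfl
  rw [hflow]
  have e1 : q ^ Fintype.card E = Nat.card ψ.ker * Nat.card φ.ker := by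
    rw [← cE, c1, c2]
  have e2 : q ^ Fintype.card V =
      q ^ G.compCount Finset.univ * Nat.card ψ.ker := by
    rw [← cV, c3, c4, cC]
  rw [e2, pow_add, e1]
  ring
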